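/- Let μ ∈ (0,1), κ ∈ (0, 1−μ), λ ∈ (0,1], and let K : [0,1]×[0,1] → ℝ be continuous and κ-Hölder in its first variable. Then there exists a constant C > 0 such that for every continuous v : [0,1] → ℝ and all θ₁, θ₂ ∈ [0,1] with θ₁ ≠ θ₂, |(𝒦₁v)(θ₁^{1/λ}) − (𝒦₁v)(θ₂^{1/λ})| ≤ C |θ₁ − θ₂|^κ · max_{θ∈[0,1]} |v(θ)|. -/

import Mathlib

open MeasureTheory Set

/-- The weakly singular Volterra integral operator
`(𝒦₁v)(t) = ∫₀^t (t-s)^{-μ} K(t,s) v(s) ds`. -/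
noncomputable def K1op (μ : ℝ) (K : ℝ → ℝ → ℝ) (v : ℝ → ℝ) (t : ℝ) : ℝ :=
  ∫ s in (0:ℝ)..t, (t - s) ^ (-μ) * K t s * v s

private lemma sing_intble {μ : ℝ} (hμ : μ < 1) (t a b : ℝ) :
    IntervalIntegrable (fun s => (t - s) ^ (-μ)) volume a b := by
  have h := (intervalIntegral.intervalIntegrable_rpow'
    (a := t - a) (b := t - b) (r := -μ) (by linarith)).comp_sub_left t
  simpa using h

private lemma sing_integral {μ : ℝ} (hμ : μ < 1) (t a b : ℝ) :
    ∫ s in a..b, (t - s) ^ (-μ)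
      = ((t - a) ^ (1 - μ) - (t - b) ^ (1 - μ)) / (1 - μ) := by
  have h1 : (1:ℝ) - μ = -μ + 1 := by ring
  rw [h1, intervalIntegral.integral_comp_sub_left (fun x => x ^ (-μ)) t,
    integral_rpow (Or.inl (by linarith))]

private lemma prod_intble {μ : ℝ} (hμ : μ < 1) {t a b : ℝ} (hab : a ≤ b)
    {g : ℝ → ℝ} (hg : ContinuousOn g (Icc a b)) {Cg : ℝ}
    (hCg : ∀ s ∈ Icc a b, |g s| ≤ Cg) :
    IntervalIntegrable (fun s => (t - s) ^ (-μ) * g s) volume a b := by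
  have hsing : IntegrableOn (fun s => (t - s) ^ (-μ)) (Ioc a b) volume := by
    have := sing_intble hμ t a b
    rwa [intervalIntegrable_iff_integrableOn_Ioc_of_le hab] at this
  rw [intervalIntegrable_iff_integrableOn_Ioc_of_le hab]
  have hmeas : AEStronglyMeasurable g (volume.restrict (Ioc a b)) :=
    (hg.mono Ioc_subset_Icc_self).aestronglyMeasurable measurableSet_Ioc
  have hbd : ∀ᵐ s ∂(volume.restrict (Ioc a b)), ‖g s‖ ≤ Cg := by
    filter_upwards [ae_restrict_mem measurableSet_Ioc] with s hs
    simpa [Real.norm_eq_abs] using hCg s (Ioc_subset_Icc_self hs)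
  have h := Integrable.bdd_mul hsing hmeas hbd
  rw [IntegrableOn]
  simpa [mul_comm] using h

private lemma core {μ κ : ℝ} (hμ0 : 0 < μ) (hμ1 : μ < 1) (hκ0 : 0 < κ)
    (hκ1 : κ ≤ 1 - μ) {K : ℝ → ℝ → ℝ} {M Lip : ℝ} (hM : 1 ≤ M)
    (hKc : ∀ t ∈ Icc (0:ℝ) 1, ContinuousOn (fun s => K t s) (Icc (0:ℝ) 1))
    (hKb : ∀ t ∈ Icc (0:ℝ) 1, ∀ s ∈ Icc (0:ℝ) 1, |K t s| ≤ M)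
    (hLip : 0 ≤ Lip)
    (hKH : ∀ θ₁ ∈ Icc (0:ℝ) 1, ∀ θ₂ ∈ Icc (0:ℝ) 1, ∀ s ∈ Icc (0:ℝ) 1,
      |K θ₁ s - K θ₂ s| ≤ Lip * |θ₁ - θ₂| ^ κ)
    {v : ℝ → ℝ} (hv : ContinuousOn v (Icc (0:ℝ) 1)) {Vm : ℝ}
    (hVm : ∀ s ∈ Icc (0:ℝ) 1, |v s| ≤ Vm)
    {t₁ t₂ : ℝ} (ht₁ : t₁ ∈ Icc (0:ℝ) 1) (ht₂ : t₂ ∈ Icc (0:ℝ) 1) (h21 : t₂ < t₁) :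
    |K1op μ K v t₁ - K1op μ K v t₂|
      ≤ (Lip + 2 * M) / (1 - μ) * (t₁ - t₂) ^ κ * Vm := by
  obtain ⟨ht₁0, ht₁1⟩ := ht₁
  obtain ⟨ht₂0, ht₂1⟩ := ht₂
  have h1μ : (0:ℝ) < 1 - μ := by linarith
  have hVm0 : 0 ≤ Vm := le_trans (abs_nonneg _) (hVm 0 ⟨le_refl _, zero_le_one⟩)
  set P : ℝ := (t₁ - t₂) ^ κ with hP
  set Q : ℝ := (t₁ - t₂) ^ (1 - μ) with hQ
  have hP0 : 0 ≤ P := Real.rpow_nonneg (by linarith) _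
  have hQ0 : 0 ≤ Q := Real.rpow_nonneg (by linarith) _
  have hQP : Q ≤ P :=
    Real.rpow_le_rpow_of_exponent_ge (by linarith) (by linarith) hκ1
  -- continuity and bounds of the kernels
  have hg₁c : ContinuousOn (fun s => K t₁ s * v s) (Icc (0:ℝ) 1) :=
    (hKc t₁ ⟨ht₁0, ht₁1⟩).mul hv
  have hg₂c : ContinuousOn (fun s => K t₂ s * v s) (Icc (0:ℝ) 1) :=
    (hKc t₂ ⟨ht₂0, ht₂1⟩).mul hv
  have hg₁b : ∀ s ∈ Icc (0:ℝ) 1, |K t₁ s * v s| ≤ M * Vm := by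
    intro s hs
    rw [abs_mul]
    exact mul_le_mul (hKb t₁ ⟨ht₁0, ht₁1⟩ s hs) (hVm s hs) (abs_nonneg _)
      (by linarith)
  have hg₂b : ∀ s ∈ Icc (0:ℝ) 1, |K t₂ s * v s| ≤ M * Vm := by
    intro s hs
    rw [abs_mul]
    exact mul_le_mul (hKb t₂ ⟨ht₂0, ht₂1⟩ s hs) (hVm s hs) (abs_nonneg _)
      (by linarith)
  set F₁ : ℝ → ℝ := fun s => (t₁ - s) ^ (-μ) * (K t₁ s * v s) with hF₁
  set F₂ : ℝ → ℝ := fun s => (t₂ - s) ^ (-μ) * (K t₂ s * v s) with hF₂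
  have hsub1 : Icc (0:ℝ) t₂ ⊆ Icc 0 1 := Icc_subset_Icc le_rfl ht₂1
  have hsub2 : Icc t₂ t₁ ⊆ Icc (0:ℝ) 1 := Icc_subset_Icc ht₂0 ht₁1
  have I1a : IntervalIntegrable F₁ volume 0 t₂ :=
    prod_intble hμ1 ht₂0 (hg₁c.mono hsub1) (fun s hs => hg₁b s (hsub1 hs))
  have I1b : IntervalIntegrable F₁ volume t₂ t₁ :=
    prod_intble hμ1 h21.le (hg₁c.mono hsub2) (fun s hs => hg₁b s (hsub2 hs))
  have I2 : IntervalIntegrable F₂ volume 0 t₂ :=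
    prod_intble hμ1 ht₂0 (hg₂c.mono hsub1) (fun s hs => hg₂b s (hsub1 hs))
  have hK1 : ∀ t, K1op μ K v t = ∫ s in (0:ℝ)..t,
      (t - s) ^ (-μ) * (K t s * v s) := by
    intro t; simp only [K1op, mul_assoc]
  have hsplit : K1op μ K v t₁ - K1op μ K v t₂
      = (∫ s in (0:ℝ)..t₂, (F₁ s - F₂ s)) + ∫ s in t₂..t₁, F₁ s := by
    rw [hK1, hK1, ← intervalIntegral.integral_add_adjacent_intervals I1a I1b,
      intervalIntegral.integral_sub I1a I2]
    ring
  -- second term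
  have hT2 : |∫ s in t₂..t₁, F₁ s| ≤ M * Vm * Q / (1 - μ) := by
    have h1 : |∫ s in t₂..t₁, F₁ s| ≤ ∫ s in t₂..t₁, |F₁ s| :=
      intervalIntegral.abs_integral_le_integral_abs h21.le
    have h2 : ∫ s in t₂..t₁, |F₁ s| ≤ ∫ s in t₂..t₁, M * Vm * (t₁ - s) ^ (-μ) := by
      refine intervalIntegral.integral_mono_on h21.le I1b.abs
        ((sing_intble hμ1 t₁ t₂ t₁).const_mul _) ?_
      intro s hs
      have hb : 0 ≤ (t₁ - s) ^ (-μ) := Real.rpow_nonneg (by linarith [hs.2]) _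
      calc |F₁ s| = (t₁ - s) ^ (-μ) * |K t₁ s * v s| := by
            rw [hF₁, abs_mul, abs_of_nonneg hb]
        _ ≤ (t₁ - s) ^ (-μ) * (M * Vm) :=
            mul_le_mul_of_nonneg_left (hg₁b s (hsub2 hs)) hb
        _ = M * Vm * (t₁ - s) ^ (-μ) := by ring
    have h3 : ∫ s in t₂..t₁, M * Vm * (t₁ - s) ^ (-μ) = M * Vm * (Q / (1 - μ)) := by
      rw [intervalIntegral.integral_const_mul, sing_integral hμ1, sub_self,
        Real.zero_rpow (by linarith : (1:ℝ) - μ ≠ 0), hQ]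
      ring
    calc |∫ s in t₂..t₁, F₁ s| ≤ ∫ s in t₂..t₁, M * Vm * (t₁ - s) ^ (-μ) :=
          le_trans h1 h2
      _ = M * Vm * (Q / (1 - μ)) := h3
      _ = M * Vm * Q / (1 - μ) := by ring
  -- first term
  set D : ℝ → ℝ := fun s => Lip * P * Vm * (t₁ - s) ^ (-μ)
    + M * Vm * ((t₂ - s) ^ (-μ) - (t₁ - s) ^ (-μ)) with hD
  have hDint : IntervalIntegrable D volume 0 t₂ :=
    ((sing_intble hμ1 t₁ 0 t₂).const_mul _).add
      (((sing_intble hμ1 t₂ 0 t₂).sub (sing_intble hμ1 t₁ 0 t₂)).const_mul _)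
  have hae : ∀ᵐ s ∂(volume.restrict (Icc (0:ℝ) t₂)),
      |F₁ s - F₂ s| ≤ D s := by
    have hne : ∀ᵐ (s : ℝ) ∂(volume.restrict (Icc (0:ℝ) t₂)), s ≠ t₂ := by
      refine ae_restrict_of_ae ?_
      rw [ae_iff]
      have hset : {s : ℝ | ¬ s ≠ t₂} = {t₂} := by ext x; simp
      rw [hset]
      exact Real.volume_singleton
    filter_upwards [ae_restrict_mem measurableSet_Icc, hne] with s hs hsne
    have hs2 : s < t₂ := lt_of_le_of_ne hs.2 hsne
    have hs01 : s ∈ Icc (0:ℝ) 1 := ⟨hs.1, by linarith⟩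
    have ha1 : (0:ℝ) ≤ (t₁ - s) ^ (-μ) := Real.rpow_nonneg (by linarith) _
    have hle : (t₁ - s) ^ (-μ) ≤ (t₂ - s) ^ (-μ) :=
      Real.rpow_le_rpow_of_nonpos (by linarith) (by linarith) (by linarith)
    have hKd : |K t₁ s - K t₂ s| ≤ Lip * P := by
      have h := hKH t₁ ⟨ht₁0, ht₁1⟩ t₂ ⟨ht₂0, ht₂1⟩ s hs01
      rwa [abs_of_pos (by linarith : (0:ℝ) < t₁ - t₂)] at h
    have hvs : |v s| ≤ Vm := hVm s hs01
    have hK2 : |K t₂ s| ≤ M := hKb t₂ ⟨ht₂0, ht₂1⟩ s hs01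
    have hLipP : 0 ≤ Lip * P := mul_nonneg hLip hP0
    have e : F₁ s - F₂ s = (t₁ - s) ^ (-μ) * ((K t₁ s - K t₂ s) * v s)
        + ((t₁ - s) ^ (-μ) - (t₂ - s) ^ (-μ)) * (K t₂ s * v s) := by
      rw [hF₁, hF₂]; ring
    have habs1 : |(t₁ - s) ^ (-μ) * ((K t₁ s - K t₂ s) * v s)|
        ≤ (t₁ - s) ^ (-μ) * (Lip * P * Vm) := by
      rw [abs_mul, abs_mul, abs_of_nonneg ha1]
      exact mul_le_mul_of_nonneg_left
        (mul_le_mul hKd hvs (abs_nonneg _) hLipP) ha1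
    have habs2 : |((t₁ - s) ^ (-μ) - (t₂ - s) ^ (-μ)) * (K t₂ s * v s)|
        ≤ ((t₂ - s) ^ (-μ) - (t₁ - s) ^ (-μ)) * (M * Vm) := by
      rw [abs_mul, abs_sub_comm, abs_of_nonneg (by linarith)]
      refine mul_le_mul_of_nonneg_left ?_ (by linarith)
      rw [abs_mul]
      exact mul_le_mul hK2 hvs (abs_nonneg _) (by linarith)
    calc |F₁ s - F₂ s| ≤ |(t₁ - s) ^ (-μ) * ((K t₁ s - K t₂ s) * v s)|
          + |((t₁ - s) ^ (-μ) - (t₂ - s) ^ (-μ)) * (K t₂ s * v s)| := by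
          rw [e]; exact abs_add_le _ _
      _ ≤ (t₁ - s) ^ (-μ) * (Lip * P * Vm)
          + ((t₂ - s) ^ (-μ) - (t₁ - s) ^ (-μ)) * (M * Vm) :=
          add_le_add habs1 habs2
      _ = D s := by rw [hD]; ring
  have hT1 : |∫ s in (0:ℝ)..t₂, (F₁ s - F₂ s)|
      ≤ (Lip * P * Vm + M * Vm * Q) / (1 - μ) := by
    have h1 : |∫ s in (0:ℝ)..t₂, (F₁ s - F₂ s)|
        ≤ ∫ s in (0:ℝ)..t₂, |F₁ s - F₂ s| :=
      intervalIntegral.abs_integral_le_integral_abs ht₂0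
    have h2 : ∫ s in (0:ℝ)..t₂, |F₁ s - F₂ s| ≤ ∫ s in (0:ℝ)..t₂, D s :=
      intervalIntegral.integral_mono_ae_restrict ht₂0 (I1a.sub I2).abs hDint hae
    have h3 : ∫ s in (0:ℝ)..t₂, D s
        = Lip * P * Vm * ((t₁ ^ (1 - μ) - Q) / (1 - μ))
          + M * Vm * ((t₂ ^ (1 - μ) - 0) / (1 - μ)
            - (t₁ ^ (1 - μ) - Q) / (1 - μ)) := by
      rw [hD, intervalIntegral.integral_add
          (((sing_intble hμ1 t₁ 0 t₂).const_mul _))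
          ((((sing_intble hμ1 t₂ 0 t₂).sub (sing_intble hμ1 t₁ 0 t₂)).const_mul _)),
        intervalIntegral.integral_const_mul, intervalIntegral.integral_const_mul,
        intervalIntegral.integral_sub (sing_intble hμ1 t₂ 0 t₂) (sing_intble hμ1 t₁ 0 t₂),
        sing_integral hμ1, sing_integral hμ1]
      simp only [sub_zero, sub_self,
        Real.zero_rpow (show (1:ℝ) - μ ≠ 0 by linarith), hQ]
    have hA1 : t₁ ^ (1 - μ) ≤ 1 := Real.rpow_le_one ht₁0 ht₁1 (by linarith)
    have hA2 : t₂ ^ (1 - μ) ≤ t₁ ^ (1 - μ) :=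
      Real.rpow_le_rpow ht₂0 h21.le (by linarith)
    have hA20 : 0 ≤ t₂ ^ (1 - μ) := Real.rpow_nonneg ht₂0 _
    have hLPV : 0 ≤ Lip * P * Vm := mul_nonneg (mul_nonneg hLip hP0) hVm0
    have hMV : 0 ≤ M * Vm := mul_nonneg (by linarith) hVm0
    have hnum : Lip * P * Vm * (t₁ ^ (1 - μ) - Q)
          + M * Vm * (t₂ ^ (1 - μ) - (t₁ ^ (1 - μ) - Q))
        ≤ Lip * P * Vm + M * Vm * Q := by
      nlinarith [mul_nonneg hLPV (show (0:ℝ) ≤ 1 - t₁ ^ (1 - μ) + Q by linarith),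
        mul_nonneg hMV (sub_nonneg.2 hA2)]
    have h4 : Lip * P * Vm * ((t₁ ^ (1 - μ) - Q) / (1 - μ))
          + M * Vm * ((t₂ ^ (1 - μ) - 0) / (1 - μ) - (t₁ ^ (1 - μ) - Q) / (1 - μ))
        ≤ (Lip * P * Vm + M * Vm * Q) / (1 - μ) := by
      have e4 : Lip * P * Vm * ((t₁ ^ (1 - μ) - Q) / (1 - μ))
          + M * Vm * ((t₂ ^ (1 - μ) - 0) / (1 - μ) - (t₁ ^ (1 - μ) - Q) / (1 - μ))
          = (Lip * P * Vm * (t₁ ^ (1 - μ) - Q)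
            + M * Vm * (t₂ ^ (1 - μ) - (t₁ ^ (1 - μ) - Q))) / (1 - μ) := by
        ring
      rw [e4]
      exact div_le_div_of_nonneg_right hnum h1μ.le
    calc |∫ s in (0:ℝ)..t₂, (F₁ s - F₂ s)| ≤ ∫ s in (0:ℝ)..t₂, D s := le_trans h1 h2
      _ = _ := h3
      _ ≤ (Lip * P * Vm + M * Vm * Q) / (1 - μ) := h4
  -- combine
  have hfin : (Lip * P * Vm + M * Vm * Q) / (1 - μ) + M * Vm * Q / (1 - μ)
      ≤ (Lip + 2 * M) / (1 - μ) * P * Vm := by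
    rw [← add_div, div_mul_eq_mul_div, div_mul_eq_mul_div]
    have hMV : 0 ≤ M * Vm := mul_nonneg (by linarith) hVm0
    refine div_le_div_of_nonneg_right ?_ h1μ.le
    nlinarith [mul_nonneg hMV (sub_nonneg.2 hQP)]
  calc |K1op μ K v t₁ - K1op μ K v t₂|
      ≤ |∫ s in (0:ℝ)..t₂, (F₁ s - F₂ s)| + |∫ s in t₂..t₁, F₁ s| := by
        rw [hsplit]; exact abs_add_le _ _
    _ ≤ (Lip * P * Vm + M * Vm * Q) / (1 - μ) + M * Vm * Q / (1 - μ) :=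
        add_le_add hT1 hT2
    _ ≤ (Lip + 2 * M) / (1 - μ) * P * Vm := hfin

private lemma rpow_sub_le {p a b : ℝ} (hp : 1 ≤ p) (hb : 0 ≤ b) (hab : b ≤ a)
    (ha1 : a ≤ 1) : a ^ p - b ^ p ≤ p * (a - b) := by
  have hd : ∀ x ∈ Icc b a, HasDerivWithinAt (fun x : ℝ => x ^ p)
      (p * x ^ (p - 1)) (Icc b a) x :=
    fun x _ => (Real.hasDerivAt_rpow_const (Or.inr hp)).hasDerivWithinAt
  have bound : ∀ x ∈ Ico b a, ‖p * x ^ (p - 1)‖ ≤ p := by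
    intro x hx
    have hx0 : 0 ≤ x := le_trans hb hx.1
    have hx1 : x ≤ 1 := le_trans hx.2.le ha1
    rw [Real.norm_eq_abs, abs_mul, abs_of_nonneg (by linarith : (0:ℝ) ≤ p),
      abs_of_nonneg (Real.rpow_nonneg hx0 _)]
    nlinarith [Real.rpow_le_one hx0 hx1 (by linarith : (0:ℝ) ≤ p - 1)]
  have h := norm_image_sub_le_of_norm_deriv_le_segment' hd bound a
    (right_mem_Icc.2 hab)
  rw [Real.norm_eq_abs] at h
  calc a ^ p - b ^ p ≤ |a ^ p - b ^ p| := le_abs_self _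
    _ ≤ p * (a - b) := h


/-- Hölder-type bound for the composition of `𝒦₁` with `θ ↦ θ^{1/λ}`:
for `μ ∈ (0,1)`, `κ ∈ (0,1-μ)`, `λ ∈ (0,1]` and `K` continuous and `κ`-Hölder in
its first variable, there is `C > 0` with
`|(𝒦₁v)(θ₁^{1/λ}) - (𝒦₁v)(θ₂^{1/λ})| ≤ C |θ₁-θ₂|^κ · max |v|`
for all continuous `v` and `θ₁ ≠ θ₂` in `[0,1]`. -/
theorem K1_holder_increment_bound_fractional (μ κ lam : ℝ) (hμ : μ ∈ Ioo (0:ℝ) 1)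
    (hκ : κ ∈ Ioo (0:ℝ) (1 - μ)) (hlam : lam ∈ Ioc (0:ℝ) 1) (K : ℝ → ℝ → ℝ)
    (hKcont : ContinuousOn (fun p : ℝ × ℝ => K p.1 p.2) (Icc 0 1 ×ˢ Icc 0 1))
    (Lip : ℝ) (hLip : 0 ≤ Lip)
    (hKH : ∀ θ₁ ∈ Icc (0:ℝ) 1, ∀ θ₂ ∈ Icc (0:ℝ) 1, ∀ s ∈ Icc (0:ℝ) 1,
      |K θ₁ s - K θ₂ s| ≤ Lip * |θ₁ - θ₂| ^ κ) :
    ∃ C > (0:ℝ), ∀ v : ℝ → ℝ, ContinuousOn v (Icc (0:ℝ) 1) →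
      ∀ θ₁ ∈ Icc (0:ℝ) 1, ∀ θ₂ ∈ Icc (0:ℝ) 1, θ₁ ≠ θ₂ →
      |K1op μ K v (θ₁ ^ (1/lam)) - K1op μ K v (θ₂ ^ (1/lam))|
        ≤ C * |θ₁ - θ₂| ^ κ * sSup ((fun θ => |v θ|) '' Icc (0:ℝ) 1) := by
  obtain ⟨hμ0, hμ1⟩ := hμ
  obtain ⟨hκ0, hκ1⟩ := hκ
  obtain ⟨hlam0, hlam1⟩ := hlam
  have h1μ : (0:ℝ) < 1 - μ := by linarith
  set p : ℝ := 1 / lam with hpdef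
  have hp1 : 1 ≤ p := by
    rw [hpdef, le_div_iff₀ hlam0]; linarith
  have hp0 : 0 < p := by linarith
  -- bound on K
  obtain ⟨M₀, hM₀⟩ := (isCompact_Icc.prod isCompact_Icc).exists_bound_of_continuousOn hKcont
  set M : ℝ := max M₀ 1 with hMdef
  have hM1 : 1 ≤ M := le_max_right _ _
  have hKb : ∀ t ∈ Icc (0:ℝ) 1, ∀ s ∈ Icc (0:ℝ) 1, |K t s| ≤ M := by
    intro t ht s hs
    have := hM₀ (t, s) ⟨ht, hs⟩
    rw [Real.norm_eq_abs] at this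
    exact le_trans this (le_max_left _ _)
  have hKc : ∀ t ∈ Icc (0:ℝ) 1, ContinuousOn (fun s => K t s) (Icc (0:ℝ) 1) := by
    intro t ht
    have : ContinuousOn (fun s : ℝ => (t, s)) (Icc (0:ℝ) 1) :=
      (continuous_const.prodMk continuous_id).continuousOn
    exact hKcont.comp this (fun s hs => ⟨ht, hs⟩)
  refine ⟨(Lip + 2 * M) / (1 - μ) * p ^ κ, ?_, ?_⟩
  · have hpκ : 0 < p ^ κ := Real.rpow_pos_of_pos hp0 _
    have : 0 < (Lip + 2 * M) / (1 - μ) := by positivity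
    positivity
  intro v hv θ₁ hθ₁ θ₂ hθ₂ hne
  set Vm : ℝ := sSup ((fun θ => |v θ|) '' Icc (0:ℝ) 1) with hVmdef
  have hVm : ∀ s ∈ Icc (0:ℝ) 1, |v s| ≤ Vm := by
    intro s hs
    exact le_csSup (isCompact_Icc.bddAbove_image hv.abs) (mem_image_of_mem _ hs)
  have hVm0 : 0 ≤ Vm := le_trans (abs_nonneg _) (hVm 0 ⟨le_refl _, zero_le_one⟩)
  have main : ∀ a ∈ Icc (0:ℝ) 1, ∀ b ∈ Icc (0:ℝ) 1, b < a →
      |K1op μ K v (a ^ p) - K1op μ K v (b ^ p)|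
        ≤ (Lip + 2 * M) / (1 - μ) * p ^ κ * |a - b| ^ κ * Vm := by
    intro a ha b hb hba
    have hta : a ^ p ∈ Icc (0:ℝ) 1 :=
      ⟨Real.rpow_nonneg ha.1 _, Real.rpow_le_one ha.1 ha.2 hp0.le⟩
    have htb : b ^ p ∈ Icc (0:ℝ) 1 :=
      ⟨Real.rpow_nonneg hb.1 _, Real.rpow_le_one hb.1 hb.2 hp0.le⟩
    have hlt : b ^ p < a ^ p := Real.rpow_lt_rpow hb.1 hba hp0
    have hcore := core hμ0 hμ1 hκ0 hκ1.le hM1 hKc hKb hLip hKH hv hVm hta htb hlt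
    have hlip2 : a ^ p - b ^ p ≤ p * (a - b) := rpow_sub_le hp1 hb.1 hba.le ha.2
    have h1 : (a ^ p - b ^ p) ^ κ ≤ (p * (a - b)) ^ κ :=
      Real.rpow_le_rpow (by linarith) hlip2 hκ0.le
    have h2 : (p * (a - b)) ^ κ = p ^ κ * (a - b) ^ κ :=
      Real.mul_rpow hp0.le (by linarith)
    have hab : |a - b| = a - b := abs_of_pos (by linarith)
    have hcoef : 0 ≤ (Lip + 2 * M) / (1 - μ) := by positivity
    calc |K1op μ K v (a ^ p) - K1op μ K v (b ^ p)|
        ≤ (Lip + 2 * M) / (1 - μ) * (a ^ p - b ^ p) ^ κ * Vm := hcore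
      _ ≤ (Lip + 2 * M) / (1 - μ) * (p ^ κ * (a - b) ^ κ) * Vm := by
          rw [← h2]
          exact mul_le_mul_of_nonneg_right
            (mul_le_mul_of_nonneg_left h1 hcoef) hVm0
      _ = (Lip + 2 * M) / (1 - μ) * p ^ κ * |a - b| ^ κ * Vm := by
          rw [hab]; ring
  rcases hne.lt_or_gt with h | h
  · have := main θ₂ hθ₂ θ₁ hθ₁ h
    rw [abs_sub_comm (K1op μ K v (θ₂ ^ p)), abs_sub_comm θ₂ θ₁] at this
    exact this
  · exact main θ₁ hθ₁ θ₂ hθ₂ h
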